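/- Let t ∈ {1,…,n−1}. The restrictions of the polynomials v_{t,I} to the set of nilpotent matrices are linearly independent over k: if (c_I) is a family of scalars in k indexed by the subsets I ⊆ {2,…,n} with |I| = t, and ∑_I c_I · v_{t,I}(A) = 0 for every nilpotent n×n matrix A over k, then c_I = 0 for all I. -/

import Mathlib

open MvPolynomial

/-- Evaluation of a polynomial function on `gl_n` at the `n x n` matrix `A`. -/
noncomputable def evalMat {k : Type*} [CommSemiring k] {n : ℕ}
    (A : Matrix (Fin n) (Fin n) k) (f : MvPolynomial (Fin n × Fin n) k) : k :=
  MvPolynomial.eval (fun p => A p.1 p.2) f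

/-- `s_j`: the polynomial function on `gl_n` whose value at `A` is `(−1)^j` times the
coefficient of `X^(n−j)` in `det(X·1ₙ − A)`; defined as `(−1)^j` times the corresponding
coefficient of the characteristic polynomial of the generic `n×n` matrix `(ξ_ij)`. -/
noncomputable def sPoly (k : Type*) [Field k] (n : ℕ) (j : ℕ) :
    MvPolynomial (Fin n × Fin n) k :=
  (-1) ^ j * ((Matrix.of fun i j : Fin n =>
    (MvPolynomial.X (i, j) : MvPolynomial (Fin n × Fin n) k)).charpoly.coeff (n - j))

/-- `v_{t,I}`: the determinant of the `t×t` matrix whose `(a, m)` entry is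
`∂s_{j_m}/∂ξ_{i,n}` where `i = a+1` (`1`-indexed, so row `a` and column `n−1`
`0`-indexed) and `j_1 < ⋯ < j_t` are the elements of `I`. -/
noncomputable def vTI (k : Type*) [Field k] (n t : ℕ) (hn : 0 < n) (I : Finset ℕ) :
    MvPolynomial (Fin n × Fin n) k :=
  Matrix.det (Matrix.of fun a m : Fin t =>
    MvPolynomial.pderiv (⟨(a : ℕ) % n, Nat.mod_lt _ hn⟩, ⟨n - 1, by omega⟩)
      (sPoly k n ((I.sort (· ≤ ·)).getD (m : ℕ) 0)))

lemma coeff_aeval_deriv {k : Type*} [CommSemiring k] {σ : Type*} [DecidableEq σ]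
    (x : σ → k) (p : σ) (f : MvPolynomial σ k) :
    (MvPolynomial.eval₂ Polynomial.C (fun q => Polynomial.C (x q) +
        if q = p then (Polynomial.X : Polynomial k) else 0) f).coeff 0 = MvPolynomial.eval x f ∧
    (MvPolynomial.eval₂ Polynomial.C (fun q => Polynomial.C (x q) +
        if q = p then (Polynomial.X : Polynomial k) else 0) f).coeff 1
      = MvPolynomial.eval x (pderiv p f) := by
  induction f using MvPolynomial.induction_on with
  | C a => simp
  | add f g hf hg => simp [MvPolynomial.eval₂_add, hf.1, hf.2, hg.1, hg.2]
  | mul_X f q hf =>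
    rw [MvPolynomial.eval₂_mul, MvPolynomial.eval₂_X]
    constructor
    · rw [Polynomial.mul_coeff_zero, hf.1]
      by_cases hq : q = p <;> simp [hq]
    · rw [Polynomial.mul_coeff_one, hf.1, hf.2, pderiv_mul, map_add, map_mul, map_mul]
      by_cases hq : q = p <;> simp [hq, mul_comm, add_comm]

lemma adjugate_charmatrix_of_charpoly {k : Type*} [Field k] {n : ℕ} (hn : 0 < n)
    (N : Matrix (Fin n) (Fin n) k) (hc : N.charpoly = Polynomial.X ^ n) :
    Matrix.adjugate (Matrix.charmatrix N)
      = ∑ m ∈ Finset.range n, (Polynomial.X ^ m : Polynomial k) •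
          (N ^ (n - 1 - m)).map Polynomial.C := by
  have hN : N ^ n = 0 := by
    have h0 := Matrix.aeval_self_charpoly N
    rw [hc, map_pow, Polynomial.aeval_X] at h0
    exact h0
  set G : Matrix (Fin n) (Fin n) (Polynomial k) :=
    ∑ m ∈ Finset.range n, (Polynomial.X ^ m : Polynomial k) • (N ^ (n - 1 - m)).map Polynomial.C
    with hG
  have hdet : (Matrix.charmatrix N).det = Polynomial.X ^ n := hc ▸ rfl
  have key : Matrix.charmatrix N * G
      = Matrix.charmatrix N * Matrix.adjugate (Matrix.charmatrix N) := by
    rw [Matrix.mul_adjugate, hdet]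
    have hsplit : Matrix.charmatrix N = (Polynomial.X : Polynomial k) •
        (1 : Matrix (Fin n) (Fin n) (Polynomial k)) - N.map Polynomial.C := by
      rw [Matrix.charmatrix, Matrix.smul_one_eq_diagonal]
      rfl
    obtain ⟨n', rfl⟩ : ∃ n', n = n' + 1 := ⟨n - 1, by omega⟩
    rw [hsplit, sub_mul, Finset.mul_sum, Finset.mul_sum]
    have h1 : ∀ m ∈ Finset.range (n' + 1),
        ((Polynomial.X : Polynomial k) • (1 : Matrix (Fin (n'+1)) (Fin (n'+1)) (Polynomial k))) *
          ((Polynomial.X ^ m : Polynomial k) • (N ^ (n' + 1 - 1 - m)).map Polynomial.C)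
          = (Polynomial.X ^ (m+1) : Polynomial k) • (N ^ (n' - m)).map Polynomial.C := by
      intro m _
      rw [Matrix.smul_mul, Matrix.mul_smul, one_mul, smul_smul, pow_succ, mul_comm]
      norm_num
    have h2 : ∀ m ∈ Finset.range (n' + 1),
        (N.map (Polynomial.C : k →+* Polynomial k)) *
          ((Polynomial.X ^ m : Polynomial k) • (N ^ (n' + 1 - 1 - m)).map Polynomial.C)
          = (Polynomial.X ^ m : Polynomial k) • (N ^ (n' + 1 - m)).map Polynomial.C := by
      intro m hm
      rw [Finset.mem_range] at hm
      rw [Matrix.mul_smul, ← Matrix.map_mul, ← pow_succ']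
      have e : n' + 1 - 1 - m + 1 = n' + 1 - m := by omega
      rw [e]
    rw [Finset.sum_congr rfl h1, Finset.sum_congr rfl h2]
    rw [Finset.sum_range_succ, Finset.sum_range_succ' (fun m => (Polynomial.X ^ m : Polynomial k) • (N ^ (n' + 1 - m)).map Polynomial.C)]
    have e3 : ∀ m, n' + 1 - (m + 1) = n' - m := fun m => by omega
    simp only [e3, Nat.sub_self, pow_zero, Nat.sub_zero, hN]
    rw [Matrix.map_zero _ (Polynomial.C_0), smul_zero, add_zero, Matrix.map_one _ Polynomial.C_0 Polynomial.C_1]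
    abel
  have key2 := congrArg (fun M => Matrix.adjugate (Matrix.charmatrix N) * M) key
  simp only [← mul_assoc, Matrix.adjugate_mul, hdet, Matrix.smul_mul, one_mul] at key2
  refine Matrix.ext fun a b => ?_
  have h3 := congrFun (congrFun key2 a) b
  simp only [Matrix.smul_apply, smul_eq_mul] at h3
  exact (mul_left_cancel₀ (pow_ne_zero _ Polynomial.X_ne_zero) h3).symm

lemma adjugate_charmatrix_coeff {k : Type*} [Field k] {n : ℕ} (hn : 0 < n)
    (N : Matrix (Fin n) (Fin n) k) (hc : N.charpoly = Polynomial.X ^ n)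
    (a b : Fin n) {m0 : ℕ} (hm : m0 < n) :
    (Matrix.adjugate (Matrix.charmatrix N) a b).coeff m0 = (N ^ (n - 1 - m0)) a b := by
  rw [adjugate_charmatrix_of_charpoly hn N hc]
  rw [Matrix.sum_apply, Polynomial.finset_sum_coeff]
  rw [Finset.sum_eq_single m0]
  · rw [Matrix.smul_apply, Matrix.map_apply, smul_eq_mul, mul_comm,
      Polynomial.C_mul_X_pow_eq_monomial, Polynomial.coeff_monomial, if_pos rfl]
  · intro m _ hne
    rw [Matrix.smul_apply, Matrix.map_apply, smul_eq_mul, mul_comm,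
      Polynomial.C_mul_X_pow_eq_monomial, Polynomial.coeff_monomial, if_neg hne]
  · intro hmem
    exact absurd (Finset.mem_range.mpr hm) hmem

lemma charmatrix_transpose {k : Type*} [CommRing k] {n : ℕ} (A : Matrix (Fin n) (Fin n) k) :
    Matrix.charmatrix (Matrix.transpose A) = Matrix.transpose (Matrix.charmatrix A) := by
  refine Matrix.ext fun p q => ?_
  by_cases h : p = q
  · subst h; simp
  · simp [Matrix.charmatrix_apply_ne _ _ _ h, Matrix.charmatrix_apply_ne _ _ _ (Ne.symm h),
      Matrix.transpose_apply]

/-- Main derivative formula. -/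
lemma evalMat_pderiv_sPoly {k : Type*} [Field k] {n : ℕ} (hn : 0 < n)
    (A : Matrix (Fin n) (Fin n) k) (hc : Matrix.charpoly (Matrix.transpose A) = Polynomial.X ^ n)
    (i last : Fin n) (j : ℕ) (hj1 : 1 ≤ j) (hj2 : j ≤ n) :
    evalMat A (MvPolynomial.pderiv (i, last) (sPoly k n j))
      = (-1 : k) ^ (j + 1) * (A ^ (j - 1)) last i := by
  set pv : Fin n × Fin n := (i, last) with hpv
  set x : Fin n × Fin n → k := fun q => A q.1 q.2 with hx
  set Φ : Fin n × Fin n → Polynomial k :=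
    fun q => Polynomial.C (x q) + if q = pv then Polynomial.X else 0 with hΦ
  set ψ : MvPolynomial (Fin n × Fin n) k →+* Polynomial k :=
    MvPolynomial.eval₂Hom (Polynomial.C : k →+* Polynomial k) Φ with hψ
  have hψcoe : ∀ f, ψ f = MvPolynomial.eval₂ Polynomial.C Φ f := fun f => rfl
  -- step 1: pull out the sign
  have hsign : ∀ gg : MvPolynomial (Fin n × Fin n) k,
      ((-1 : MvPolynomial (Fin n × Fin n) k)) ^ j * gg = MvPolynomial.C ((-1 : k) ^ j) * gg := by
    intro gg
    rw [map_pow, map_neg, map_one]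
  set Xmat : Matrix (Fin n) (Fin n) (MvPolynomial (Fin n × Fin n) k) :=
    Matrix.of fun a b : Fin n => MvPolynomial.X (a, b) with hXmat
  set g : MvPolynomial (Fin n × Fin n) k := Xmat.charpoly.coeff (n - j) with hg
  have hsP : sPoly k n j = MvPolynomial.C ((-1 : k) ^ j) * g := by
    rw [sPoly, hsign]
  have hder : evalMat A (MvPolynomial.pderiv pv (sPoly k n j))
      = (-1 : k) ^ j * evalMat A (MvPolynomial.pderiv pv g) := by
    rw [hsP, pderiv_C_mul, evalMat, map_mul, eval_C, evalMat]
  -- step 2: dual-number style bridge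
  have hbridge := coeff_aeval_deriv x pv g
  have hev : evalMat A (MvPolynomial.pderiv pv g) = (ψ g).coeff 1 := by
    rw [evalMat, ← hbridge.2, hψcoe]
  -- step 3: push ψ through charpoly
  have hmap : ψ g = ((Xmat.map ψ).charpoly).coeff (n - j) := by
    rw [hg, Matrix.charpoly_map, Polynomial.coeff_map]
  -- step 4: identify the mapped matrix
  set AC : Matrix (Fin n) (Fin n) (Polynomial k) := A.map Polynomial.C with hAC
  set colf : Fin n → Polynomial k :=
    fun r => Polynomial.C (A r last) + if r = i then Polynomial.X else 0 with hcolf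
  have hBmat : Xmat.map ψ = AC.updateCol last colf := by
    refine Matrix.ext fun p q => ?_
    have : (Xmat.map ψ) p q = Φ (p, q) := by
      rw [Matrix.map_apply, hXmat]
      show MvPolynomial.eval₂ Polynomial.C Φ (MvPolynomial.X (p, q)) = _
      rw [MvPolynomial.eval₂_X]
    rw [this, hΦ]
    by_cases hq : q = last
    · subst hq
      rw [Matrix.updateCol_apply, if_pos rfl, hcolf]
      by_cases hp : p = i <;> simp [hp, hpv, hx, Prod.ext_iff]
    · rw [Matrix.updateCol_apply, if_neg hq]
      have : ((p, q) = pv) = False := by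
        simp [hpv, Prod.ext_iff, hq]
      simp [this, hAC, Matrix.map_apply, hx]
  -- step 5: charmatrix of the updated matrix
  set M₀ : Matrix (Fin n) (Fin n) (Polynomial k) :=
    (Matrix.charmatrix A).updateCol last (Pi.single i 1) with hM₀
  set χ : Polynomial k →+* Polynomial (Polynomial k) :=
    Polynomial.mapRingHom (Polynomial.C : k →+* Polynomial k) with hχ
  have hcm : Matrix.charmatrix (AC.updateCol last colf)
      = (Matrix.charmatrix AC).updateCol last
          (fun r => Matrix.charmatrix AC r last
            - Polynomial.C (if r = i then (Polynomial.X : Polynomial k) else 0)) := by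
    refine Matrix.ext fun p q => ?_
    by_cases hq : q = last
    · subst hq
      rw [Matrix.updateCol_apply, if_pos rfl, Matrix.charmatrix_apply,
        Matrix.charmatrix_apply, Matrix.updateCol_apply, if_pos rfl, hcolf, map_add,
        hAC, Matrix.map_apply]
      ring
    · rw [Matrix.updateCol_apply, if_neg hq, Matrix.charmatrix_apply,
        Matrix.charmatrix_apply, Matrix.updateCol_apply, if_neg hq]
  have hcharB : (AC.updateCol last colf).charpoly
      = AC.charpoly - Polynomial.C (Polynomial.X : Polynomial k) *
          ((Matrix.charmatrix AC).updateCol last (Pi.single i 1)).det := by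
    rw [Matrix.charpoly, hcm]
    have hcol : (fun r => Matrix.charmatrix AC r last
          - Polynomial.C (if r = i then (Polynomial.X : Polynomial k) else 0))
        = (fun r => Matrix.charmatrix AC r last) +
          (fun r => (-(Polynomial.C (Polynomial.X : Polynomial k))) • (Pi.single i 1 : Fin n → Polynomial (Polynomial k)) r) := by
      funext r
      by_cases hr : r = i <;>
        simp [hr, Pi.single_apply, sub_eq_add_neg]
    rw [hcol, Matrix.det_updateCol_add]
    have h1 : (Matrix.charmatrix AC).updateCol last (fun r => Matrix.charmatrix AC r last)
        = Matrix.charmatrix AC := Matrix.updateCol_eq_self _ _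
    rw [h1]
    have h2 : ((Matrix.charmatrix AC).updateCol last
          (fun r => (-(Polynomial.C (Polynomial.X : Polynomial k))) • (Pi.single i 1 : Fin n → Polynomial (Polynomial k)) r)).det
        = (-(Polynomial.C (Polynomial.X : Polynomial k))) *
          ((Matrix.charmatrix AC).updateCol last (Pi.single i 1)).det := by
      rw [← Matrix.det_updateCol_smul]
      rfl
    rw [h2, Matrix.charpoly]
    ring
  -- step 6: base change of the cofactor determinant
  have hM₀map : (Matrix.charmatrix AC).updateCol last (Pi.single i 1) = M₀.map χ := by
    have hACmap : Matrix.charmatrix AC = (Matrix.charmatrix A).map χ := by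
      rw [hAC, Matrix.charmatrix_map, hχ, Polynomial.coe_mapRingHom]
    rw [hACmap, hM₀]
    refine Matrix.ext fun p q => ?_
    by_cases hq : q = last
    · subst hq
      rw [Matrix.updateCol_apply, if_pos rfl, Matrix.map_apply,
        Matrix.updateCol_apply, if_pos rfl]
      by_cases hp : p = i <;> simp [hp, Pi.single_apply]
    · rw [Matrix.updateCol_apply, if_neg hq, Matrix.map_apply, Matrix.map_apply,
        Matrix.updateCol_apply, if_neg hq]
  have hD : ((Matrix.charmatrix AC).updateCol last (Pi.single i 1)).det = χ M₀.det := by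
    rw [hM₀map, RingHom.map_det, RingHom.mapMatrix_apply]
  -- step 7: the relevant coefficient
  set c₀ : k := (M₀.det).coeff (n - j) with hc₀
  have hcoeff : ((Xmat.map ψ).charpoly).coeff (n - j)
      = Polynomial.C (A.charpoly.coeff (n - j)) - Polynomial.X * Polynomial.C c₀ := by
    rw [hBmat, hcharB, hD, Polynomial.coeff_sub]
    congr 1
    · rw [hAC, Matrix.charpoly_map, Polynomial.coeff_map]
    · rw [Polynomial.coeff_C_mul, hχ, Polynomial.coe_mapRingHom, Polynomial.coeff_map, hc₀,
        mul_comm]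
  have hcoeff1 : (ψ g).coeff 1 = -c₀ := by
    rw [hmap, hcoeff, Polynomial.coeff_sub, Polynomial.coeff_C]
    rw [mul_comm, Polynomial.C_mul_X_eq_monomial, Polynomial.coeff_monomial]
    simp
  -- step 8: identify c₀ with the matrix power entry
  have hc₀val : c₀ = (A ^ (j - 1)) last i := by
    have hdet : M₀.det = Matrix.adjugate (Matrix.charmatrix (Matrix.transpose A)) i last := by
      rw [Matrix.adjugate_apply, charmatrix_transpose, ← Matrix.det_transpose M₀, hM₀,
        ← Matrix.updateRow_transpose]
    rw [hc₀, hdet, adjugate_charmatrix_coeff hn _ hc i last (by omega)]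
    have he : n - 1 - (n - j) = j - 1 := by omega
    rw [he, ← Matrix.transpose_pow, Matrix.transpose_apply]
  -- final assembly
  rw [hder, hev, hcoeff1, hc₀val]
  rw [pow_succ]
  ring

lemma exists_perm_extend {α : Type*} [DecidableEq α] [Fintype α] (s : Finset α) (f : α → α)
    (hf : Set.InjOn f ↑s) : ∃ τ : Equiv.Perm α, ∀ a ∈ s, τ a = f a := by
  classical
  have hinj : Function.Injective (fun a : {x // x ∈ s} =>
      (⟨f a.1, Finset.mem_image_of_mem f a.2⟩ : {x // x ∈ s.image f})) := by
    intro a b hab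
    exact Subtype.ext (hf a.2 b.2 (congrArg Subtype.val hab))
  have hbij : Function.Bijective (fun a : {x // x ∈ s} =>
      (⟨f a.1, Finset.mem_image_of_mem f a.2⟩ : {x // x ∈ s.image f})) := by
    rw [Fintype.bijective_iff_injective_and_card]
    exact ⟨hinj, by rw [Fintype.card_coe, Fintype.card_coe, Finset.card_image_of_injOn hf]⟩
  refine ⟨(Equiv.ofBijective _ hbij).extendSubtype, fun a ha => ?_⟩
  rw [Equiv.extendSubtype_apply_of_mem _ a ha]
  rfl

section TauMatrix
variable {k : Type*} [Field k] {n : ℕ}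

/-- The matrix attached to a permutation `τ`: the "successor in τ-order" adjacency matrix. -/
noncomputable def tauMat (k : Type*) [Field k] {n : ℕ} (τ : Equiv.Perm (Fin n)) :
    Matrix (Fin n) (Fin n) k :=
  Matrix.of fun p q => if (τ q : ℕ) = (τ p : ℕ) + 1 then 1 else 0

lemma tauMat_pow (τ : Equiv.Perm (Fin n)) (m : ℕ) :
    (tauMat k τ) ^ m = Matrix.of fun p q => if (τ q : ℕ) = (τ p : ℕ) + m then 1 else 0 := by
  induction m with
  | zero =>
    refine Matrix.ext fun p q => ?_
    rw [pow_zero, Matrix.one_apply, Matrix.of_apply]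
    by_cases h : p = q
    · subst h; simp
    · rw [if_neg h, if_neg]
      intro hcon
      exact h (τ.injective (Fin.ext (by omega)))
  | succ m ih =>
    refine Matrix.ext fun p q => ?_
    rw [pow_succ, ih, Matrix.mul_apply, Matrix.of_apply]
    simp only [tauMat, Matrix.of_apply]
    by_cases h : (τ q : ℕ) = (τ p : ℕ) + (m + 1)
    · rw [if_pos h]
      have hlt : (τ p : ℕ) + m < n := by
        have := (τ q).isLt
        omega
      set r₀ : Fin n := τ.symm ⟨(τ p : ℕ) + m, hlt⟩ with hr₀
      have hτr₀ : (τ r₀ : ℕ) = (τ p : ℕ) + m := by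
        rw [hr₀, Equiv.apply_symm_apply]
      rw [Finset.sum_eq_single r₀]
      · rw [if_pos hτr₀, if_pos (by omega), one_mul]
      · intro r _ hr
        rw [if_neg, zero_mul]
        intro hcon
        exact hr (τ.injective (Fin.ext (by rw [hτr₀]; exact hcon)))
      · intro hmem
        exact absurd (Finset.mem_univ r₀) hmem
    · rw [if_neg h]
      apply Finset.sum_eq_zero
      intro r _
      by_cases h1 : (τ r : ℕ) = (τ p : ℕ) + m
      · have h2 : ¬ ((τ q : ℕ) = (τ r : ℕ) + 1) := by omega
        rw [if_neg h2, mul_zero]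
      · rw [if_neg h1, zero_mul]

lemma tauMat_pow_n (τ : Equiv.Perm (Fin n)) : (tauMat k τ) ^ n = 0 := by
  rw [tauMat_pow]
  refine Matrix.ext fun p q => ?_
  rw [Matrix.of_apply, if_neg, Matrix.zero_apply]
  have := (τ q).isLt
  omega

lemma charpoly_transpose' {R : Type*} [CommRing R] (A : Matrix (Fin n) (Fin n) R) :
    Matrix.charpoly (Matrix.transpose A) = Matrix.charpoly A := by
  rw [Matrix.charpoly, Matrix.charpoly]
  have : Matrix.charmatrix (Matrix.transpose A) = Matrix.transpose (Matrix.charmatrix A) := by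
    refine Matrix.ext fun p q => ?_
    by_cases h : p = q
    · subst h; simp
    · simp [Matrix.charmatrix_apply_ne _ _ _ h, Matrix.charmatrix_apply_ne _ _ _ (Ne.symm h),
        Matrix.transpose_apply]
  rw [this, Matrix.det_transpose]

lemma tauMat_charpoly (τ : Equiv.Perm (Fin n)) :
    Matrix.charpoly (tauMat k τ) = Polynomial.X ^ n := by
  have hre : Matrix.reindex τ τ (tauMat k τ)
      = Matrix.of fun a b : Fin n => if (b : ℕ) = (a : ℕ) + 1 then (1 : k) else 0 := by
    refine Matrix.ext fun a b => ?_
    rw [Matrix.reindex_apply, Matrix.submatrix_apply]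
    simp [tauMat]
  have htri : (Matrix.of fun a b : Fin n =>
      if (b : ℕ) = (a : ℕ) + 1 then (1 : k) else 0).BlockTriangular id := by
    intro a b hab
    rw [Matrix.of_apply, if_neg]
    simp only [id] at hab
    have : (b : ℕ) < (a : ℕ) := hab
    omega
  rw [← Matrix.charpoly_reindex τ (tauMat k τ), hre]
  rw [Matrix.charpoly, Matrix.det_of_upperTriangular htri.charmatrix]
  have : ∀ a : Fin n, (Matrix.charmatrix (Matrix.of fun a b : Fin n =>
      if (b : ℕ) = (a : ℕ) + 1 then (1 : k) else 0)) a a = Polynomial.X := by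
    intro a
    rw [Matrix.charmatrix_apply_eq, Matrix.of_apply, if_neg (by omega), map_zero, sub_zero]
  rw [Finset.prod_congr rfl (fun a _ => this a)]
  simp

end TauMatrix


set_option maxHeartbeats 1000000 in
lemma evalMat_vTI_det {k : Type*} [Field k] {n t : ℕ} (hn2 : 2 ≤ n) (ht : 1 ≤ t)
    (htn : t ≤ n - 1) (τ : Equiv.Perm (Fin n)) (l : List ℕ)
    (hτlast : (τ ⟨n - 1, by omega⟩ : ℕ) = 0)
    (hτsmall : ∀ a : ℕ, ∀ _ : a < t, (τ ⟨a, by omega⟩ : ℕ) = l.getD (t - 1 - a) 0 - 1)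
    (hl2 : ∀ a : ℕ, a < t → 2 ≤ l.getD (t - 1 - a) 0)
    (I : Finset ℕ) (hIsub : I ⊆ Finset.Icc 2 n) (hIcard : I.card = t) :
    evalMat (tauMat k τ) (vTI k n t (by omega) I) = Matrix.det (Matrix.of fun a m : Fin t =>
      (-1 : k) ^ ((I.sort (· ≤ ·)).getD (m : ℕ) 0 + 1) *
        (if l.getD (t - 1 - (a : ℕ)) 0 = (I.sort (· ≤ ·)).getD (m : ℕ) 0 then 1 else 0)) := by
  have hcharT : Matrix.charpoly (Matrix.transpose (tauMat k τ)) = Polynomial.X ^ n := by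
    rw [charpoly_transpose']
    exact tauMat_charpoly τ
  have hIget : ∀ m : ℕ, m < t → (I.sort (· ≤ ·)).getD m 0 ∈ I := by
    intro m hm
    have hm' : m < (I.sort (· ≤ ·)).length := by
      rw [Finset.length_sort, hIcard]
      exact hm
    rw [List.getD_eq_getElem _ 0 hm']
    exact (Finset.mem_sort _).mp (List.getElem_mem hm')
  have hIbounds : ∀ m : ℕ, m < t → 2 ≤ (I.sort (· ≤ ·)).getD m 0 ∧
      (I.sort (· ≤ ·)).getD m 0 ≤ n := by
    intro m hm
    have := hIsub (hIget m hm)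
    rwa [Finset.mem_Icc] at this
  rw [vTI, evalMat, RingHom.map_det]
  congr 1
  refine Matrix.ext fun a m => ?_
  rw [RingHom.mapMatrix_apply, Matrix.map_apply, Matrix.of_apply, Matrix.of_apply]
  set j : ℕ := (I.sort (· ≤ ·)).getD (m : ℕ) 0 with hj
  have hj2 : 2 ≤ j := (hIbounds m m.isLt).1
  have hjn : j ≤ n := (hIbounds m m.isLt).2
  have hval : ((tauMat k τ) ^ (j - 1)) (⟨n - 1, by omega⟩ : Fin n)
      (⟨(a : ℕ) % n, Nat.mod_lt _ (by omega)⟩ : Fin n)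
      = (if l.getD (t - 1 - (a : ℕ)) 0 = j then (1 : k) else 0) := by
    rw [tauMat_pow, Matrix.of_apply]
    have hτl : (τ (⟨n - 1, by omega⟩ : Fin n) : ℕ) = 0 := hτlast
    have hrow : (⟨(a : ℕ) % n, Nat.mod_lt _ (by omega)⟩ : Fin n)
        = (⟨(a : ℕ), by have := a.isLt; omega⟩ : Fin n) := by
      apply Fin.ext
      show (a : ℕ) % n = (a : ℕ)
      exact Nat.mod_eq_of_lt (by have := a.isLt; omega)
    have hτa : (τ (⟨(a : ℕ) % n, Nat.mod_lt _ (by omega)⟩ : Fin n) : ℕ)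
        = l.getD (t - 1 - (a : ℕ)) 0 - 1 := by
      rw [hrow]
      exact hτsmall (a : ℕ) a.isLt
    have hga2 := hl2 (a : ℕ) a.isLt
    by_cases hcond : l.getD (t - 1 - (a : ℕ)) 0 = j
    · rw [if_pos hcond, if_pos]
      rw [hτa, hτl, hcond]
      omega
    · rw [if_neg hcond, if_neg]
      rw [hτa, hτl]
      omega
  exact (evalMat_pderiv_sPoly (by omega : 0 < n) (tauMat k τ) hcharT _ _ j (by omega) hjn).trans
    (by rw [hval])

/-- The restrictions of the `v_{t,I}` to the set of nilpotent matrices are linearly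
independent over `k`. -/
theorem stmt10 (k : Type*) [Field k] [IsAlgClosed k] (n t : ℕ) (hn : 2 ≤ n)
    (ht : 1 ≤ t) (htn : t ≤ n - 1) (c : Finset ℕ → k)
    (h : ∀ A : Matrix (Fin n) (Fin n) k, IsNilpotent A →
      ∑ I ∈ (Finset.Icc 2 n).powersetCard t, c I * evalMat A (vTI k n t (by omega) I) = 0) :
    ∀ I ∈ (Finset.Icc 2 n).powersetCard t, c I = 0 := by
  intro I₀ hI₀
  classical
  rw [Finset.mem_powersetCard] at hI₀
  obtain ⟨hsub, hcard⟩ := hI₀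
  have hn0 : 0 < n := by omega
  set l : List ℕ := I₀.sort (· ≤ ·) with hl
  have hlen : l.length = t := by rw [hl, Finset.length_sort, hcard]
  have hnodup : l.Nodup := I₀.sort_nodup (· ≤ ·)
  have hbounds : ∀ {x : ℕ}, x ∈ I₀ → 2 ≤ x ∧ x ≤ n := by
    intro x hx
    have := hsub hx
    rwa [Finset.mem_Icc] at this
  have hgetmem : ∀ m : ℕ, m < t → l.getD m 0 ∈ I₀ := by
    intro m hm
    have hm' : m < l.length := by omega
    rw [List.getD_eq_getElem l 0 hm']
    exact (Finset.mem_sort _).mp (List.getElem_mem hm')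
  have hgetinj : ∀ m1 m2 : ℕ, m1 < t → m2 < t → l.getD m1 0 = l.getD m2 0 → m1 = m2 := by
    intro m1 m2 h1 h2 heq
    have h1' : m1 < l.length := by omega
    have h2' : m2 < l.length := by omega
    rw [List.getD_eq_getElem l 0 h1', List.getD_eq_getElem l 0 h2'] at heq
    exact (List.Nodup.getElem_inj_iff hnodup).mp heq
  set lastn : Fin n := ⟨n - 1, by omega⟩ with hlastn
  have hbnd : ∀ a : ℕ, l.getD (t - 1 - a) 0 - 1 < n := by
    intro a
    have := (hbounds (hgetmem (t - 1 - a) (by omega))).2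
    omega
  set f : Fin n → Fin n := fun v => if (v : ℕ) < t then ⟨l.getD (t - 1 - (v : ℕ)) 0 - 1, hbnd v⟩
      else ⟨0, by omega⟩ with hf
  set s : Finset (Fin n) := Finset.univ.filter (fun v => (v : ℕ) < t ∨ v = lastn) with hs
  have hfval : ∀ (v : Fin n), (v : ℕ) < t → (f v : ℕ) = l.getD (t - 1 - (v : ℕ)) 0 - 1 := by
    intro v hv
    rw [hf]
    simp [hv]
  have hfge1 : ∀ (v : Fin n), (v : ℕ) < t → 1 ≤ (f v : ℕ) := by
    intro v hv
    rw [hfval v hv]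
    have := (hbounds (hgetmem (t - 1 - (v : ℕ)) (by omega))).1
    omega
  have hinj : Set.InjOn f ↑s := by
    intro a ha b hb hab
    simp only [hs, Finset.coe_filter, Set.mem_setOf_eq, Finset.mem_univ, true_and] at ha hb
    by_cases haT : (a : ℕ) < t <;> by_cases hbT : (b : ℕ) < t
    · have h1 := hfval a haT
      have h2 := hfval b hbT
      have heq : l.getD (t - 1 - (a : ℕ)) 0 - 1 = l.getD (t - 1 - (b : ℕ)) 0 - 1 := by
        rw [← h1, ← h2, hab]
      have ha2 := (hbounds (hgetmem (t - 1 - (a : ℕ)) (by omega))).1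
      have hb2 := (hbounds (hgetmem (t - 1 - (b : ℕ)) (by omega))).1
      have heq' : l.getD (t - 1 - (a : ℕ)) 0 = l.getD (t - 1 - (b : ℕ)) 0 := by omega
      have := hgetinj _ _ (by omega) (by omega) heq'
      exact Fin.ext (by omega)
    · exfalso
      have hb' : b = lastn := hb.resolve_left hbT
      have : (f b : ℕ) = 0 := by
        rw [hb', hf]
        have hvl : (lastn : ℕ) = n - 1 := rfl
        have : ¬ ((lastn : ℕ) < t) := by omega
        simp [this]
      have := hfge1 a haT
      rw [hab] at this
      omega
    · exfalso
      have ha' : a = lastn := ha.resolve_left haT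
      have : (f a : ℕ) = 0 := by
        rw [ha', hf]
        have hvl : (lastn : ℕ) = n - 1 := rfl
        have : ¬ ((lastn : ℕ) < t) := by omega
        simp [this]
      have := hfge1 b hbT
      rw [← hab] at this
      omega
    · rw [ha.resolve_left haT, hb.resolve_left hbT]
  obtain ⟨τ, hτ⟩ := exists_perm_extend s f hinj
  have hτlast : (τ lastn : ℕ) = 0 := by
    have hmem : lastn ∈ s := by
      rw [hs]
      simp
    rw [hτ lastn hmem, hf]
    have hvl : (lastn : ℕ) = n - 1 := rfl
    have hnl : ¬ ((lastn : ℕ) < t) := by omega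
    simp [hnl]
  have hτsmall : ∀ a : ℕ, ∀ _ : a < t, (τ ⟨a, by omega⟩ : ℕ) = l.getD (t - 1 - a) 0 - 1 := by
    intro a ha
    have hmem : (⟨a, by omega⟩ : Fin n) ∈ s := by
      rw [hs]
      simp only [Finset.mem_filter, Finset.mem_univ, true_and]
      left
      exact ha
    rw [hτ _ hmem]
    exact hfval ⟨a, by omega⟩ ha
  set A : Matrix (Fin n) (Fin n) k := tauMat k τ with hA
  have hcharT : Matrix.charpoly (Matrix.transpose A) = Polynomial.X ^ n := by
    rw [charpoly_transpose']
    exact tauMat_charpoly τ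
  have hnil : IsNilpotent A := ⟨n, tauMat_pow_n τ⟩
  have hsum := h A hnil
  -- evaluation of vTI at A
  have hl2 : ∀ a : ℕ, a < t → 2 ≤ l.getD (t - 1 - a) 0 := by
    intro a ha
    exact (hbounds (hgetmem (t - 1 - a) (by omega))).1
  have hvti : ∀ I : Finset ℕ, I ⊆ Finset.Icc 2 n → I.card = t →
      evalMat A (vTI k n t (by omega) I) = Matrix.det (Matrix.of fun a m : Fin t =>
        (-1 : k) ^ ((I.sort (· ≤ ·)).getD (m : ℕ) 0 + 1) *
          (if l.getD (t - 1 - (a : ℕ)) 0 = (I.sort (· ≤ ·)).getD (m : ℕ) 0 then 1 else 0)) := by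
    intro I hIsub hIcard
    exact evalMat_vTI_det hn ht htn τ l hτlast hτsmall hl2 I hIsub hIcard
  -- the nonvanishing determinant for I₀
  have hI₀mem : I₀ ∈ (Finset.Icc 2 n).powersetCard t :=
    Finset.mem_powersetCard.mpr ⟨hsub, hcard⟩
  have hzero : ∀ I ∈ (Finset.Icc 2 n).powersetCard t, I ≠ I₀ →
      c I * evalMat A (vTI k n t (by omega) I) = 0 := by
    intro I hI hne
    rw [Finset.mem_powersetCard] at hI
    obtain ⟨hIsub, hIcard⟩ := hI
    have hns : ¬ I ⊆ I₀ := by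
      intro hcon
      exact hne (Finset.eq_of_subset_of_card_le hcon (by rw [hcard, hIcard]))
    obtain ⟨j', hj'I, hj'nI₀⟩ := Finset.not_subset.mp hns
    have hj'mem : j' ∈ I.sort (· ≤ ·) := (Finset.mem_sort _).mpr hj'I
    obtain ⟨idx, hidx, hval⟩ := List.mem_iff_getElem.mp hj'mem
    have hidx' : idx < t := by
      rwa [Finset.length_sort, hIcard] at hidx
    rw [hvti I hIsub hIcard]
    rw [Matrix.det_eq_zero_of_column_eq_zero ⟨idx, hidx'⟩, mul_zero]
    intro a
    rw [Matrix.of_apply]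
    have hgd : (I.sort (· ≤ ·)).getD idx 0 = j' := by
      rw [List.getD_eq_getElem _ 0 hidx, hval]
    simp only [hgd]
    rw [if_neg, mul_zero]
    intro hcon
    exact hj'nI₀ (hcon ▸ hgetmem (t - 1 - (a : ℕ)) (by omega))
  have hmain : c I₀ * evalMat A (vTI k n t (by omega) I₀) = 0 := by
    rw [← Finset.sum_eq_single_of_mem I₀ hI₀mem hzero]
    exact hsum
  -- evaluate at I₀
  have hdet : evalMat A (vTI k n t (by omega) I₀) ≠ 0 := by
    rw [hvti I₀ hsub hcard]
    set w : Fin t → k := fun m => (-1 : k) ^ (l.getD (m : ℕ) 0 + 1) with hw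
    have hmat : (Matrix.of fun a m : Fin t =>
        (-1 : k) ^ ((I₀.sort (· ≤ ·)).getD (m : ℕ) 0 + 1) *
          (if l.getD (t - 1 - (a : ℕ)) 0 = (I₀.sort (· ≤ ·)).getD (m : ℕ) 0 then 1 else 0))
        = (Matrix.diagonal w).submatrix (Fin.revPerm : Equiv.Perm (Fin t)) id := by
      refine Matrix.ext fun a m => ?_
      rw [Matrix.of_apply, Matrix.submatrix_apply, id]
      have hrev : ((Fin.revPerm a : Fin t) : ℕ) = t - 1 - (a : ℕ) := by
        simp only [Fin.revPerm_apply, Fin.val_rev]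
        omega
      by_cases hcond : l.getD (t - 1 - (a : ℕ)) 0 = l.getD (m : ℕ) 0
      · have hidxeq : t - 1 - (a : ℕ) = (m : ℕ) := hgetinj _ _ (by omega) m.isLt hcond
        have : Fin.revPerm a = m := Fin.ext (by rw [hrev, hidxeq])
        rw [this, Matrix.diagonal_apply_eq, if_pos hcond, mul_one]
      · have hne' : Fin.revPerm a ≠ m := by
          intro hcon
          apply hcond
          have : t - 1 - (a : ℕ) = (m : ℕ) := by rw [← hrev, hcon]
          rw [this]
        rw [Matrix.diagonal_apply_ne _ hne', if_neg hcond, mul_zero]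
    rw [hmat, Matrix.det_permute, Matrix.det_diagonal]
    apply mul_ne_zero
    · rcases Int.units_eq_one_or (Equiv.Perm.sign (Fin.revPerm : Equiv.Perm (Fin t))) with hs1 | hs1 <;>
        rw [hs1] <;> simp
    · apply Finset.prod_ne_zero_iff.mpr
      intro m _
      rw [hw]
      simp only []
      apply pow_ne_zero
      exact neg_ne_zero.mpr one_ne_zero
  rcases mul_eq_zero.mp hmain with h0 | h0
  · exact h0
  · exact absurd h0 hdet
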